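/- Let 𝒫 be a symmetric idempotent m×m matrix, K symmetric positive definite, μ > 0, S = K·(I−𝒫)·K + μ·K, H = (I−𝒫)·K·S⁻¹, and Q = (I−𝒫) − (I−𝒫)·K·S⁻¹·K·(I−𝒫). Then H is symmetric (H = Hᵀ = S⁻¹·K·(I−𝒫)) and Q = μ·H. -/

import Mathlib

open Matrix

/-- For `𝒫` symmetric idempotent, `K` symmetric positive definite, `μ > 0`,
`S = K(I−𝒫)K + μK`, `H = (I−𝒫)·K·S⁻¹` and `Q = (I−𝒫) − (I−𝒫)·K·S⁻¹·K·(I−𝒫)`: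
`H` is symmetric (`H = Hᵀ = S⁻¹·K·(I−𝒫)`) and `Q = μ·H`. -/
theorem stmt6 (m : ℕ) (Proj : Matrix (Fin m) (Fin m) ℝ)
    (hProjSymm : Projᵀ = Proj) (hProjIdem : Proj * Proj = Proj)
    (K : Matrix (Fin m) (Fin m) ℝ) (hK : K.PosDef) (μ : ℝ) (hμ : 0 < μ)
    (S : Matrix (Fin m) (Fin m) ℝ) (hS : S = K * (1 - Proj) * K + μ • K)
    (H : Matrix (Fin m) (Fin m) ℝ) (hH : H = (1 - Proj) * K * S⁻¹)
    (Q : Matrix (Fin m) (Fin m) ℝ)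
    (hQ : Q = (1 - Proj) - (1 - Proj) * K * S⁻¹ * K * (1 - Proj)) :
    Hᵀ = H ∧ H = S⁻¹ * K * (1 - Proj) ∧ Q = μ • H := by
  have hKsymm : Kᵀ = K := hK.1.eq
  have hPsymm : (1 - Proj)ᵀ = 1 - Proj := by
    simp [transpose_sub, hProjSymm]
  have hPidem : (1 - Proj) * (1 - Proj) = 1 - Proj := by
    rw [Matrix.sub_mul, Matrix.mul_sub, Matrix.mul_sub, hProjIdem]
    simp
  have hPidem' : (1 - Proj) * ((1 - Proj) * K) = (1 - Proj) * K := by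
    rw [← Matrix.mul_assoc, hPidem]
  have hPherm : (1 - Proj)ᴴ = 1 - Proj := by
    rw [conjTranspose_eq_transpose_of_trivial, hPsymm]
  have hKherm : Kᴴ = K := by
    rw [conjTranspose_eq_transpose_of_trivial, hKsymm]
  have hPSD : (K * (1 - Proj) * K).PosSemidef := by
    have h1 : K * (1 - Proj) * K = ((1 - Proj) * K)ᴴ * ((1 - Proj) * K) := by
      rw [conjTranspose_mul, hKherm, hPherm]
      simp only [Matrix.mul_assoc, hPidem']
    rw [h1]
    exact posSemidef_conjTranspose_mul_self _
  have hμK : (μ • K).PosDef := by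
    refine ⟨?_, fun x hx => ?_⟩
    · show (μ • K)ᴴ = μ • K
      rw [conjTranspose_smul, hKherm, star_trivial]
    · simpa [Finsupp.mul_sum, mul_assoc, mul_left_comm] using smul_pos hμ (hK.2 hx)
  have hSpd : S.PosDef := by
    rw [hS]
    exact Matrix.PosDef.posSemidef_add hPSD hμK
  have hSsymm : Sᵀ = S := hSpd.1.eq
  have hdet : IsUnit S.det := hSpd.det_pos.ne'.isUnit
  have hSinv : S⁻¹ * S = 1 := nonsing_inv_mul S hdet
  have hinvS : S * S⁻¹ = 1 := mul_nonsing_inv S hdet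
  have hSinvSymm : (S⁻¹)ᵀ = S⁻¹ := by
    rw [transpose_nonsing_inv, hSsymm]
  have hcomm : S * ((1 - Proj) * K) = (K * (1 - Proj)) * S := by
    rw [hS]
    simp only [Matrix.add_mul, Matrix.mul_add, smul_mul_assoc, mul_smul_comm,
      Matrix.mul_assoc]
  have hcomm' : (1 - Proj) * K * S⁻¹ = S⁻¹ * (K * (1 - Proj)) := by
    calc (1 - Proj) * K * S⁻¹ = S⁻¹ * (S * ((1 - Proj) * K)) * S⁻¹ := by
          rw [← Matrix.mul_assoc, hSinv, Matrix.one_mul, Matrix.mul_assoc]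
      _ = S⁻¹ * ((K * (1 - Proj)) * S) * S⁻¹ := by rw [hcomm]
      _ = S⁻¹ * (K * (1 - Proj)) := by
          rw [Matrix.mul_assoc, Matrix.mul_assoc, hinvS, Matrix.mul_one]
  have hHeq : H = S⁻¹ * K * (1 - Proj) := by
    rw [hH, hcomm', Matrix.mul_assoc]
  have hHsymm : Hᵀ = H := by
    rw [hH, transpose_mul, transpose_mul, hSinvSymm, hKsymm, hPsymm]
    exact hcomm'.symm
  refine ⟨by rw [hHsymm], hHeq, ?_⟩
  have hKP : K * (1 - Proj) * (K * (1 - Proj)) = S * (1 - Proj) - μ • (K * (1 - Proj)) := by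
    rw [hS, Matrix.add_mul, smul_mul_assoc]
    rw [Matrix.mul_assoc (K * (1 - Proj)) K (1 - Proj)]
    abel
  calc Q = (1 - Proj) - S⁻¹ * (K * (1 - Proj) * (K * (1 - Proj))) := by
        rw [hQ, hcomm']
        simp only [Matrix.mul_assoc]
    _ = (1 - Proj) - S⁻¹ * (S * (1 - Proj) - μ • (K * (1 - Proj))) := by rw [hKP]
    _ = (1 - Proj) - ((1 - Proj) - μ • (S⁻¹ * (K * (1 - Proj)))) := by
        rw [Matrix.mul_sub, ← Matrix.mul_assoc, hSinv, Matrix.one_mul, mul_smul_comm]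
    _ = μ • H := by rw [hHeq, Matrix.mul_assoc]; abel
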